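/- Let ω_{11}, ω_{12}, ω_{21}, ω_{22} be real numbers such that τ := ω_{11} + ω_{22} − ω_{12} − ω_{21} is not in 2πℤ. For complex numbers f_1, f_2 not both zero, define u_1 = (exp(iω_{11}) f_1 + exp(iω_{12}) f_2)/2 and u_2 = (exp(iω_{21}) f_1 + exp(iω_{22}) f_2)/2. Then |u_1|² + |u_2|² < |f_1|² + |f_2|². -/

import Mathlib

open Complex in
theorem aux_expand (a b : ℝ) (f₁ f₂ : ℂ) :
    ‖(Complex.exp (a*I)*f₁ + Complex.exp (b*I)*f₂)/2‖^2
      = (Complex.normSq f₁ + Complex.normSq f₂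
          + 2*((Complex.exp ((a-b)*I)) * (f₁ * (starRingEnd ℂ) f₂)).re)/4 := by
  rw [Complex.sq_norm, map_div₀, Complex.normSq_add, Complex.normSq_mul, Complex.normSq_mul]
  have h1 : Complex.normSq (Complex.exp (a*I)) = 1 := by
    rw [Complex.normSq_eq_norm_sq, Complex.norm_exp_ofReal_mul_I]; norm_num
  have h2 : Complex.normSq (Complex.exp (b*I)) = 1 := by
    rw [Complex.normSq_eq_norm_sq, Complex.norm_exp_ofReal_mul_I]; norm_num
  have h3 : Complex.exp (↑a*I) * f₁ * (starRingEnd ℂ) (Complex.exp (↑b*I) * f₂)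
      = Complex.exp ((↑a-↑b)*I) * (f₁ * (starRingEnd ℂ) f₂) := by
    rw [map_mul, ← Complex.exp_conj]
    have h : Complex.exp (↑a*I) * Complex.exp ((starRingEnd ℂ) (↑b*I)) = Complex.exp ((↑a-↑b)*I) := by
      rw [← Complex.exp_add]; congr 1; simp; ring
    calc Complex.exp (↑a*I) * f₁ * (Complex.exp ((starRingEnd ℂ) (↑b*I)) * (starRingEnd ℂ) f₂)
        = (Complex.exp (↑a*I) * Complex.exp ((starRingEnd ℂ) (↑b*I))) * (f₁ * (starRingEnd ℂ) f₂) := by ring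
      _ = _ := by rw [h]
  rw [h1, h2, h3]
  norm_num [Complex.normSq_apply]

theorem stmt0 (ω₁₁ ω₁₂ ω₂₁ ω₂₂ : ℝ)
    (hτ : ¬ ∃ n : ℤ, ω₁₁ + ω₂₂ - ω₁₂ - ω₂₁ = 2 * Real.pi * n)
    (f₁ f₂ : ℂ) (hf : ¬ (f₁ = 0 ∧ f₂ = 0)) :
    ‖(Complex.exp (ω₁₁ * Complex.I) * f₁ +
        Complex.exp (ω₁₂ * Complex.I) * f₂) / 2‖ ^ 2
      + ‖(Complex.exp (ω₂₁ * Complex.I) * f₁ +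
        Complex.exp (ω₂₂ * Complex.I) * f₂) / 2‖ ^ 2
      < ‖f₁‖ ^ 2 + ‖f₂‖ ^ 2 := by
  set α := ω₁₁ - ω₁₂ with hα
  set β := ω₂₁ - ω₂₂ with hβ
  set w := f₁ * (starRingEnd ℂ) f₂ with hw
  set c := Complex.exp ((α:ℂ)*Complex.I) + Complex.exp ((β:ℂ)*Complex.I) with hc
  -- cos (α - β) < 1
  have hcos : Real.cos (α - β) < 1 := by
    rcases lt_or_eq_of_le (Real.cos_le_one (α - β)) with h | h
    · exact h
    · exfalso
      rcases (Real.cos_eq_one_iff _).1 h with ⟨n, hn⟩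
      exact hτ ⟨n, by rw [hα, hβ] at hn; linarith⟩
  -- |c|^2 = 2 + 2 cos (α-β)
  have hcabs : ‖c‖ ^ 2 = 2 + 2 * Real.cos (α - β) := by
    rw [Complex.sq_norm, hc, Complex.normSq_apply]
    simp [Complex.exp_ofReal_mul_I_re, Complex.exp_ofReal_mul_I_im, Real.cos_sub]
    nlinarith [Real.sin_sq_add_cos_sq (ω₁₁-ω₁₂), Real.sin_sq_add_cos_sq (ω₂₁-ω₂₂)]
  have hclt : ‖c‖ < 2 := by
    nlinarith [norm_nonneg c]
  -- expansions
  rw [aux_expand ω₁₁ ω₁₂ f₁ f₂, aux_expand ω₂₁ ω₂₂ f₁ f₂]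
  have hre : ((Complex.exp ((↑ω₁₁-↑ω₁₂)*Complex.I)) * w).re
      + ((Complex.exp ((↑ω₂₁-↑ω₂₂)*Complex.I)) * w).re = (c * w).re := by
    rw [hc]; push_cast [hα, hβ]; rw [add_mul, Complex.add_re]
  have hbound : (c * w).re ≤ ‖c‖ * ‖w‖ := by
    calc (c * w).re ≤ ‖c * w‖ := Complex.re_le_norm _
      _ = ‖c‖ * ‖w‖ := norm_mul _ _
  have hwabs : ‖w‖ = ‖f₁‖ * ‖f₂‖ := by
    rw [hw, norm_mul, Complex.norm_conj]
  have hposz : 0 < ‖f₁‖ ^ 2 + ‖f₂‖ ^ 2 := by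
    rcases not_and_or.1 hf with h | h
    · have := norm_pos_iff.mpr h; positivity
    · have := norm_pos_iff.mpr h; positivity
  have key : (c * w).re < ‖f₁‖ ^ 2 + ‖f₂‖ ^ 2 := by
    rcases eq_or_lt_of_le (norm_nonneg w) with h0 | h0
    · have hw0 : w = 0 := by
        have := h0.symm
        rwa [norm_eq_zero] at this
      rw [hw0, mul_zero, Complex.zero_re]
      exact hposz
    · have h1 : ‖c‖ * ‖w‖ < 2 * ‖w‖ :=
        mul_lt_mul_of_pos_right hclt h0
      have h2 : 2 * ‖w‖ ≤ ‖f₁‖ ^ 2 + ‖f₂‖ ^ 2 := by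
        rw [hwabs]; nlinarith [sq_nonneg (‖f₁‖ - ‖f₂‖)]
      linarith
  have hn1 : Complex.normSq f₁ = ‖f₁‖ ^ 2 := (Complex.sq_norm f₁).symm
  have hn2 : Complex.normSq f₂ = ‖f₂‖ ^ 2 := (Complex.sq_norm f₂).symm
  rw [hn1, hn2]
  linarith [hre, key]
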